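/- arXiv:1402.4592 — 2 statements merged into one kernel-verified Lean document; each statement's English description precedes it below -/
import Mathlib

section
/- Let M be an inverse monoid with identity 1, let α : M → M be a premorphism, and let m ∈ M satisfy m*m⁻¹ = α(1). If the map t ↦ α(t)*m preserves the heap operation, i.e. α(a*b⁻¹*c)*m = (α(a)*m)*(α(b)*m)⁻¹*(α(c)*m) for all a, b, c ∈ M, then α itself preserves the heap operation: α(a*b⁻¹*c) = α(a)*(α(b))⁻¹*α(c) for all a, b, c ∈ M. -/
/-- An inverse monoid: a monoid in which every element `a` has a
(unique) inverse `a⁻¹` with `a * a⁻¹ * a = a` and `a⁻¹ * a * a⁻¹ = a⁻¹`. -/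
class InverseMonoid (M : Type*) extends Monoid M, Inv M where
  mul_inv_mul : ∀ a : M, a * a⁻¹ * a = a
  inv_mul_inv : ∀ a : M, a⁻¹ * a * a⁻¹ = a⁻¹
  inv_unique : ∀ a b : M, a * b * a = a → b * a * b = b → b = a⁻¹

/-- The natural partial order on an inverse monoid:
`a ≤ b` iff `a = e * b` for some idempotent `e`. -/
def npo {M : Type*} [InverseMonoid M] (a b : M) : Prop :=
  ∃ e : M, e * e = e ∧ a = e * b

/-- A premorphism: `θ (a * b) ≤ θ a * θ b` in the natural partial order. -/
def IsPremorphism {M : Type*} [InverseMonoid M] (θ : M → M) : Prop :=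
  ∀ a b : M, npo (θ (a * b)) (θ a * θ b)

section Aux
variable {M : Type*} [InverseMonoid M]

local notation "mim" => InverseMonoid.mul_inv_mul
local notation "imi" => InverseMonoid.inv_mul_inv

lemma idem_assoc {p : M} (hp : p * p = p) : ∀ z : M, p * (p * z) = p * z :=
  fun z => by rw [← mul_assoc, hp]

lemma idem_inv {e : M} (he : e * e = e) : e⁻¹ = e :=
  (InverseMonoid.inv_unique e e (by rw [he, he]) (by rw [he, he])).symm

lemma idem_mul_idem {e f : M} (he : e * e = e) (hf : f * f = f) :
    (e * f) * (e * f) = e * f := by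
  have he' := idem_assoc he
  have hf' := idem_assoc hf
  have h1 : f * (e * f)⁻¹ * e = (e * f)⁻¹ := by
    apply InverseMonoid.inv_unique
    · have := mim (e * f)
      calc e * f * (f * (e * f)⁻¹ * e) * (e * f)
          = e * f * (e * f)⁻¹ * (e * f) := by simp [mul_assoc, he', hf']
        _ = e * f := mim (e * f)
    · calc f * (e * f)⁻¹ * e * (e * f) * (f * (e * f)⁻¹ * e)
          = f * ((e * f)⁻¹ * (e * f) * (e * f)⁻¹) * e := by
            simp [mul_assoc, he', hf']
        _ = f * (e * f)⁻¹ * e := by rw [imi (e * f)]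
  have hxx : (e * f)⁻¹ * (e * f)⁻¹ = (e * f)⁻¹ := by
    calc (e * f)⁻¹ * (e * f)⁻¹
        = f * (e * f)⁻¹ * e * (f * (e * f)⁻¹ * e) := by rw [h1]
      _ = f * ((e * f)⁻¹ * (e * f) * (e * f)⁻¹) * e := by simp [mul_assoc]
      _ = f * (e * f)⁻¹ * e := by rw [imi (e * f)]
      _ = (e * f)⁻¹ := h1
  have h2 : e * f = (e * f)⁻¹⁻¹ :=
    InverseMonoid.inv_unique (e * f)⁻¹ (e * f) (by rw [imi (e * f)])
      (by rw [mim (e * f)])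
  rw [h2, idem_inv hxx, hxx]

lemma idem_comm {e f : M} (he : e * e = e) (hf : f * f = f) :
    e * f = f * e := by
  have he' := idem_assoc he
  have hf' := idem_assoc hf
  have hef := idem_mul_idem he hf
  have hfe := idem_mul_idem hf he
  have h : f * e = (e * f)⁻¹ := by
    apply InverseMonoid.inv_unique
    · calc e * f * (f * e) * (e * f) = (e * f) * (e * f) := by
            simp [mul_assoc, he', hf']
        _ = e * f := hef
    · calc f * e * (e * f) * (f * e) = (f * e) * (f * e) := by
            simp [mul_assoc, he', hf']
        _ = f * e := hfe
  rw [h, idem_inv hef]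

lemma inv_inv' (a : M) : a⁻¹⁻¹ = a :=
  (InverseMonoid.inv_unique a⁻¹ a (imi a) (mim a)).symm

lemma mul_inv_idem (a : M) : (a * a⁻¹) * (a * a⁻¹) = a * a⁻¹ := by
  calc a * a⁻¹ * (a * a⁻¹) = (a * a⁻¹ * a) * a⁻¹ := by simp [mul_assoc]
    _ = a * a⁻¹ := by rw [mim a]

lemma inv_mul_idem (a : M) : (a⁻¹ * a) * (a⁻¹ * a) = a⁻¹ * a := by
  calc a⁻¹ * a * (a⁻¹ * a) = (a⁻¹ * a * a⁻¹) * a := by simp [mul_assoc]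
    _ = a⁻¹ * a := by rw [imi a]

lemma mul_inv_rev' (a b : M) : (a * b)⁻¹ = b⁻¹ * a⁻¹ := by
  symm
  apply InverseMonoid.inv_unique
  · calc a * b * (b⁻¹ * a⁻¹) * (a * b)
        = a * ((b * b⁻¹) * (a⁻¹ * a)) * b := by simp [mul_assoc]
      _ = a * ((a⁻¹ * a) * (b * b⁻¹)) * b := by
          rw [idem_comm (mul_inv_idem b) (inv_mul_idem a)]
      _ = (a * a⁻¹ * a) * (b * b⁻¹ * b) := by simp [mul_assoc]
      _ = a * b := by rw [mim a, mim b]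
  · calc b⁻¹ * a⁻¹ * (a * b) * (b⁻¹ * a⁻¹)
        = b⁻¹ * ((a⁻¹ * a) * (b * b⁻¹)) * a⁻¹ := by simp [mul_assoc]
      _ = b⁻¹ * ((b * b⁻¹) * (a⁻¹ * a)) * a⁻¹ := by
          rw [idem_comm (inv_mul_idem a) (mul_inv_idem b)]
      _ = (b⁻¹ * b * b⁻¹) * (a⁻¹ * a * a⁻¹) := by simp [mul_assoc]
      _ = b⁻¹ * a⁻¹ := by rw [imi a, imi b]

end Aux

theorem heap_preserving_action_implies_heap_preserving_premorphism
    {M : Type*} [InverseMonoid M] (α : M → M) (hα : IsPremorphism α)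
    (m : M) (hm : m * m⁻¹ = α 1)
    (hheap : ∀ a b c : M,
      α (a * b⁻¹ * c) * m = (α a * m) * (α b * m)⁻¹ * (α c * m)) :
    ∀ a b c : M, α (a * b⁻¹ * c) = α a * (α b)⁻¹ * α c := by
  have h1idem : α 1 * α 1 = α 1 := by rw [← hm]; exact mul_inv_idem m
  have habs : ∀ x : M, α x * α 1 = α x := by
    intro x
    obtain ⟨e, he, hx⟩ := hα x 1
    rw [mul_one] at hx
    conv_lhs => rw [hx]
    rw [mul_assoc, mul_assoc, h1idem, ← hx]
  intro a b c
  have key := congrArg (· * m⁻¹) (hheap a b c)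
  have hm' : ∀ z : M, m * (m⁻¹ * z) = α 1 * z := fun z => by rw [← mul_assoc, hm]
  calc α (a * b⁻¹ * c)
      = α (a * b⁻¹ * c) * α 1 := (habs _).symm
    _ = α (a * b⁻¹ * c) * m * m⁻¹ := by rw [mul_assoc (α (a * b⁻¹ * c)), hm]
    _ = α a * m * (α b * m)⁻¹ * (α c * m) * m⁻¹ := key
    _ = α a * (m * (m⁻¹ * ((α b)⁻¹ * (α c * (m * m⁻¹))))) := by
        rw [mul_inv_rev']; simp [mul_assoc]
    _ = α a * (α 1 * ((α b)⁻¹ * (α c * α 1))) := by rw [hm, hm']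
    _ = α a * (α 1 * ((α b)⁻¹ * α c)) := by rw [habs]
    _ = (α a * α 1) * ((α b)⁻¹ * α c) := by rw [mul_assoc]
    _ = α a * (α b)⁻¹ * α c := by rw [habs, mul_assoc]
end

section
/- Let M be an inverse monoid with identity 1, let β, γ : M → M be premorphisms, and let m, n ∈ M with n*n⁻¹ = β(1). Then γ(β(m)*n) = γ(β(m))*γ(n). (This identity establishes the associativity of the holomorph multiplication (α,m) ⋄ (β,n) = (α∘β, β(m)*n) on pairs of premorphisms and elements of M.) -/
namespace IMAux
variable {M : Type*} [InverseMonoid M]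

lemma mii (a : M) : a * a⁻¹ * a = a := InverseMonoid.mul_inv_mul a
lemma imi (a : M) : a⁻¹ * a * a⁻¹ = a⁻¹ := InverseMonoid.inv_mul_inv a

lemma inv_inv' (a : M) : (a⁻¹)⁻¹ = a :=
  (InverseMonoid.inv_unique a⁻¹ a (imi a) (mii a)).symm

lemma idem_inv {e : M} (he : e * e = e) : e⁻¹ = e :=
  (InverseMonoid.inv_unique e e (by rw [he, he]) (by rw [he, he])).symm

lemma idem_aa (a : M) : (a * a⁻¹) * (a * a⁻¹) = a * a⁻¹ := by
  rw [← mul_assoc, mii]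

lemma idem_ia (a : M) : (a⁻¹ * a) * (a⁻¹ * a) = a⁻¹ * a := by
  rw [← mul_assoc, imi]

lemma mia (a : M) : a * (a⁻¹ * a) = a := by rw [← mul_assoc, mii]
lemma iai (a : M) : a⁻¹ * (a * a⁻¹) = a⁻¹ := by rw [← mul_assoc, imi]

/-- product of two idempotents is idempotent -/
lemma idem_mul {e f : M} (he : e * e = e) (hf : f * f = f) :
    (e * f) * (e * f) = e * f := by
  set x := (e * f)⁻¹ with hx
  have key : x * (e * f) * x = x := by rw [hx]; exact imi (e * f)
  have h1 : f * x * e = x := by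
    apply InverseMonoid.inv_unique
    · calc (e * f) * (f * x * e) * (e * f)
          = e * ((f * f) * (x * ((e * e) * f))) := by simp [mul_assoc]
      _ = e * (f * (x * (e * f))) := by rw [he, hf]
      _ = (e * f) * x * (e * f) := by simp [mul_assoc]
      _ = e * f := by rw [hx]; exact mii (e * f)
    · calc (f * x * e) * (e * f) * (f * x * e)
          = f * (x * ((e * e) * (f * f)) * x) * e := by simp [mul_assoc]
      _ = f * (x * (e * f) * x) * e := by rw [he, hf]
      _ = f * x * e := by rw [key]
  have h2 : x * x = x := by
    calc x * x = (f * x * e) * (f * x * e) := by rw [h1]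
    _ = f * (x * (e * f) * x) * e := by simp [mul_assoc]
    _ = f * x * e := by rw [key]
    _ = x := h1
  have h3 : e * f = x := by
    rw [← inv_inv' (e * f), ← hx, idem_inv h2]
  rw [h3]; exact h2

/-- idempotents commute -/
lemma idem_comm {e f : M} (he : e * e = e) (hf : f * f = f) :
    e * f = f * e := by
  have hef := idem_mul he hf
  have hfe := idem_mul hf he
  have h1 : f * e = (e * f)⁻¹ := by
    apply InverseMonoid.inv_unique
    · calc (e * f) * (f * e) * (e * f) = e * ((f * f) * ((e * e) * f)) := by simp [mul_assoc]
      _ = (e * f) * (e * f) := by rw [hf, he]; simp [mul_assoc]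
      _ = e * f := hef
    · calc (f * e) * (e * f) * (f * e) = f * ((e * e) * ((f * f) * e)) := by simp [mul_assoc]
      _ = (f * e) * (f * e) := by rw [he, hf]; simp [mul_assoc]
      _ = f * e := hfe
  rw [h1, idem_inv hef]

lemma inv_mul_rev (a b : M) : (a * b)⁻¹ = b⁻¹ * a⁻¹ := by
  symm
  apply InverseMonoid.inv_unique
  · calc (a * b) * (b⁻¹ * a⁻¹) * (a * b)
        = a * ((b * b⁻¹) * (a⁻¹ * a)) * b := by simp [mul_assoc]
    _ = a * ((a⁻¹ * a) * (b * b⁻¹)) * b := by rw [idem_comm (idem_aa b) (idem_ia a)]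
    _ = (a * a⁻¹ * a) * (b * b⁻¹ * b) := by simp [mul_assoc]
    _ = a * b := by rw [mii, mii]
  · calc (b⁻¹ * a⁻¹) * (a * b) * (b⁻¹ * a⁻¹)
        = b⁻¹ * ((a⁻¹ * a) * (b * b⁻¹)) * a⁻¹ := by simp [mul_assoc]
    _ = b⁻¹ * ((b * b⁻¹) * (a⁻¹ * a)) * a⁻¹ := by rw [idem_comm (idem_ia a) (idem_aa b)]
    _ = (b⁻¹ * b * b⁻¹) * (a⁻¹ * a * a⁻¹) := by simp [mul_assoc]
    _ = b⁻¹ * a⁻¹ := by rw [imi, imi]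

lemma npo_eq {a b : M} (h : npo a b) : b * (a⁻¹ * a) = a := by
  obtain ⟨e, he, hab⟩ := h
  have hai : a⁻¹ = b⁻¹ * e := by rw [hab, inv_mul_rev, idem_inv he]
  calc b * (a⁻¹ * a) = b * (b⁻¹ * e * (e * b)) := by rw [hai, hab]
  _ = (b * b⁻¹) * ((e * e) * b) := by simp [mul_assoc]
  _ = (b * b⁻¹) * (e * b) := by rw [he]
  _ = ((b * b⁻¹) * e) * b := by rw [← mul_assoc]
  _ = (e * (b * b⁻¹)) * b := by rw [idem_comm (idem_aa b) he]
  _ = e * (b * b⁻¹ * b) := by simp [mul_assoc]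
  _ = a := by rw [mii, hab]

lemma npo_trans {a b c : M} (h1 : npo a b) (h2 : npo b c) : npo a c := by
  obtain ⟨e, he, hab⟩ := h1
  obtain ⟨f, hf, hbc⟩ := h2
  refine ⟨e * f, ?_, by rw [hab, hbc, mul_assoc]⟩
  calc (e * f) * (e * f) = e * (f * e) * f := by simp [mul_assoc]
  _ = e * (e * f) * f := by rw [idem_comm hf he]
  _ = (e * e) * (f * f) := by simp [mul_assoc]
  _ = e * f := by rw [he, hf]

lemma npo_antisymm {a b : M} (h1 : npo a b) (h2 : npo b a) : a = b := by
  obtain ⟨e, he, hab⟩ := h1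
  obtain ⟨f, hf, hba⟩ := h2
  have hefa : a = e * (f * a) := by rw [← hba, ← hab]
  have key : f * a = a := by
    calc f * a = f * (e * (f * a)) := by rw [← hefa]
    _ = (f * e) * (f * a) := by rw [mul_assoc]
    _ = (e * f) * (f * a) := by rw [idem_comm hf he]
    _ = e * ((f * f) * a) := by simp [mul_assoc]
    _ = e * (f * a) := by rw [hf]
    _ = a := hefa.symm
  rw [hba, key]

lemma npo_mul_right {a b : M} (c : M) (h : npo a b) : npo (a * c) (b * c) := by
  obtain ⟨e, he, hab⟩ := h
  exact ⟨e, he, by rw [hab, mul_assoc]⟩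

lemma npo_mul_left {a b : M} (c : M) (h : npo a b) : npo (c * a) (c * b) := by
  obtain ⟨e, he, hab⟩ := h
  refine ⟨c * e * c⁻¹, ?_, ?_⟩
  · calc (c * e * c⁻¹) * (c * e * c⁻¹)
        = c * (e * (c⁻¹ * c)) * (e * c⁻¹) := by simp [mul_assoc]
    _ = c * ((c⁻¹ * c) * e) * (e * c⁻¹) := by rw [idem_comm he (idem_ia c)]
    _ = (c * (c⁻¹ * c)) * ((e * e) * c⁻¹) := by simp [mul_assoc]
    _ = c * (e * c⁻¹) := by rw [he, mia]
    _ = c * e * c⁻¹ := by rw [mul_assoc]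
  · calc c * a = c * (e * b) := by rw [hab]
    _ = (c * (c⁻¹ * c)) * (e * b) := by rw [mia]
    _ = c * ((c⁻¹ * c) * e) * b := by simp [mul_assoc]
    _ = c * (e * (c⁻¹ * c)) * b := by rw [idem_comm (idem_ia c) he]
    _ = (c * e * c⁻¹) * (c * b) := by simp [mul_assoc]

lemma npo_mul_idem_right {e : M} (a : M) (he : e * e = e) : npo (a * e) a := by
  refine ⟨a * e * a⁻¹, ?_, ?_⟩
  · calc (a * e * a⁻¹) * (a * e * a⁻¹)
        = a * (e * (a⁻¹ * a)) * (e * a⁻¹) := by simp [mul_assoc]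
    _ = a * ((a⁻¹ * a) * e) * (e * a⁻¹) := by rw [idem_comm he (idem_ia a)]
    _ = (a * (a⁻¹ * a)) * ((e * e) * a⁻¹) := by simp [mul_assoc]
    _ = a * (e * a⁻¹) := by rw [he, mia]
    _ = a * e * a⁻¹ := by rw [mul_assoc]
  · calc a * e = (a * (a⁻¹ * a)) * e := by rw [mia]
    _ = a * ((a⁻¹ * a) * e) := by rw [mul_assoc]
    _ = a * (e * (a⁻¹ * a)) := by rw [idem_comm (idem_ia a) he]
    _ = (a * e * a⁻¹) * a := by simp [mul_assoc]

/-- if `x ≤ x*f` with `f` idempotent then `x*f = x` -/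
lemma npo_absorb {x f : M} (hf : f * f = f) (h : npo x (x * f)) : x * f = x := by
  obtain ⟨e, he, hx⟩ := h
  calc x * f = e * (x * f) * f := by rw [← hx]
  _ = e * (x * (f * f)) := by simp [mul_assoc]
  _ = e * (x * f) := by rw [hf]
  _ = x := hx.symm

/-- premorphisms preserve inverses -/
lemma prem_inv {θ : M → M} (hθ : IsPremorphism θ) (a : M) : θ a⁻¹ = (θ a)⁻¹ := by
  set x := θ a with hxd
  set y := θ a⁻¹ with hyd
  have hxle : npo x (x * y * x) := by
    have h1 : npo (θ (a * (a⁻¹ * a))) (θ a * θ (a⁻¹ * a)) := hθ a (a⁻¹ * a)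
    rw [mia] at h1
    have h2 : npo (θ a * θ (a⁻¹ * a)) (x * (y * x)) := npo_mul_left _ (hθ a⁻¹ a)
    have := npo_trans h1 h2
    rwa [← mul_assoc] at this
  have hyle : npo y (y * x * y) := by
    have h1 : npo (θ (a⁻¹ * (a * a⁻¹))) (θ a⁻¹ * θ (a * a⁻¹)) := hθ a⁻¹ (a * a⁻¹)
    rw [iai] at h1
    have h2 : npo (θ a⁻¹ * θ (a * a⁻¹)) (y * (x * y)) := npo_mul_left _ (hθ a a⁻¹)
    have := npo_trans h1 h2
    rwa [← mul_assoc] at this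
  have hx : x * y * x = x := by
    calc x * y * x = x * y * (x * (x⁻¹ * x)) := by rw [mia]
    _ = (x * y * x) * (x⁻¹ * x) := by simp [mul_assoc]
    _ = x := npo_eq hxle
  have hy : y * x * y = y := by
    calc y * x * y = y * x * (y * (y⁻¹ * y)) := by rw [mia]
    _ = (y * x * y) * (y⁻¹ * y) := by simp [mul_assoc]
    _ = y := npo_eq hyle
  exact InverseMonoid.inv_unique x y hx hy

/-- the key lemma: if `a * n * n⁻¹ = a` then any premorphism is
multiplicative on the pair `(a, n)`. -/
lemma prem_mul {γ : M → M} (hγ : IsPremorphism γ) {a n : M}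
    (h : a * (n * n⁻¹) = a) : γ (a * n) = γ a * γ n := by
  have le1 : npo (γ (a * n)) (γ a * γ n) := hγ a n
  have le2 : npo (γ a * γ n) (γ (a * n)) := by
    have h1 : npo (γ a) (γ (a * n) * (γ n)⁻¹) := by
      have := hγ (a * n) n⁻¹
      rwa [mul_assoc, h, prem_inv hγ] at this
    have h2 : npo (γ a * γ n) (γ (a * n) * (γ n)⁻¹ * γ n) := npo_mul_right _ h1
    have h3 : npo (γ (a * n) * ((γ n)⁻¹ * γ n)) (γ (a * n)) :=
      npo_mul_idem_right _ (idem_ia (γ n))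
    rw [← mul_assoc] at h3
    exact npo_trans h2 h3
  exact npo_antisymm le1 le2

end IMAux

open IMAux in
theorem holomorph_assoc_identity {M : Type*} [InverseMonoid M]
    (β γ : M → M) (hβ : IsPremorphism β) (hγ : IsPremorphism γ)
    (m n : M) (hn : n * n⁻¹ = β 1) :
    γ (β m * n) = γ (β m) * γ n := by
  have hb1 : β 1 * β 1 = β 1 := by rw [← hn, ← mul_assoc, mii]
  have hm : npo (β m) (β m * β 1) := by
    have := hβ m 1
    rwa [mul_one] at this
  have hmb : β m * β 1 = β m := npo_absorb hb1 hm
  have ha : β m * (n * n⁻¹) = β m := by rw [hn]; exact hmb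
  exact prem_mul hγ ha
end
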